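/- Let 3 < n ≤ k and let f : K^n → K with ess(f) = n and gap(f) = 2. Then either (a) there exist i ≠ j with x_j essential in f_{i←j} and ess(f_{i←j}) = n − 2, or (b) for all u ≠ v, x_v is not essential in f_{u←v}. (I.e., G_{2,k}^n = G_{2,k}^{n,+} ∪ G_{2,k}^{n,−}.) -/

import Mathlib

open scoped Classical

/-- The identification minor `f_{i←j}`: the `i`-th argument is replaced by the `j`-th. -/
def minor {n k : ℕ} (f : (Fin n → Fin k) → Fin k) (i j : Fin n) :
    (Fin n → Fin k) → Fin k :=
  fun a => f (Function.update a i (a j))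

/-- The variable `x_i` is essential in `f`. -/
def Essential {n k : ℕ} (f : (Fin n → Fin k) → Fin k) (i : Fin n) : Prop :=
  ∃ a : Fin n → Fin k, ∃ b : Fin k, f (Function.update a i b) ≠ f a

/-- The number of essential variables of `f`. -/
noncomputable def essCount {n k : ℕ} (f : (Fin n → Fin k) → Fin k) : ℕ :=
  (Finset.univ.filter (fun i => Essential f i)).card

/-- The essential arity gap of `f`. -/
noncomputable def gap {n k : ℕ} (f : (Fin n → Fin k) → Fin k) : ℕ :=
  essCount f -
    Finset.sup
      (Finset.univ.filter
        (fun p : Fin n × Fin n =>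
          p.1 ≠ p.2 ∧ Essential f p.1 ∧ Essential f p.2))
      (fun p => essCount (minor f p.1 p.2))

private lemma not_essential_iff {n k : ℕ} (g : (Fin n → Fin k) → Fin k) (s : Fin n) :
    ¬ Essential g s ↔ ∀ a b, g (Function.update a s b) = g a := by
  constructor
  · intro h a b
    by_contra hne
    exact h ⟨a, b, hne⟩
  · rintro h ⟨a, b, hne⟩
    exact hne (h a b)

private lemma minor_dead_self {n k : ℕ} (f : (Fin n → Fin k) → Fin k) {s t : Fin n}
    (hst : s ≠ t) : ¬ Essential (minor f s t) s := by
  rw [not_essential_iff]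
  intro a b
  show f _ = f _
  congr 1
  funext x
  by_cases hx : x = s
  · subst hx
    simp [Function.update_apply, Ne.symm hst]
  · simp [Function.update_apply, hx]

private lemma essCount_le {n k : ℕ} (g : (Fin n → Fin k) → Fin k) : essCount g ≤ n := by
  calc essCount g ≤ Finset.univ.card := Finset.card_filter_le _ _
  _ = n := by simp

theorem gap_two_dichotomy {k n : ℕ} (hn : 3 < n) (hnk : n ≤ k)
    (f : (Fin n → Fin k) → Fin k)
    (hess : essCount f = n) (hgap : gap f = 2) :
    (∃ i j : Fin n, i ≠ j ∧ Essential (minor f i j) j ∧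
      essCount (minor f i j) = n - 2) ∨
    (∀ u v : Fin n, u ≠ v → ¬ Essential (minor f u v) v) := by
  by_cases hgood : ∃ i j : Fin n, i ≠ j ∧ Essential (minor f i j) j ∧
      essCount (minor f i j) = n - 2
  · left; exact hgood
  right
  push_neg at hgood
  intro u v huv halive
  exfalso
  -- all variables of f are essential
  have hall : ∀ s, Essential f s := by
    have hcard : (Finset.univ.filter (fun i => Essential f i)) = Finset.univ :=
      Finset.eq_univ_of_card _ (by simpa [essCount] using hess)
    intro s
    have hs : s ∈ Finset.univ.filter (fun i => Essential f i) := by rw [hcard]; simp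
    exact (Finset.mem_filter.mp hs).2
  set S : Finset (Fin n × Fin n) :=
    Finset.univ.filter
      (fun p : Fin n × Fin n => p.1 ≠ p.2 ∧ Essential f p.1 ∧ Essential f p.2) with hS
  have hSmem : ∀ (s t : Fin n), s ≠ t → (s, t) ∈ S := fun s t hst =>
    Finset.mem_filter.mpr ⟨Finset.mem_univ _, hst, hall s, hall t⟩
  have hsup_le : S.sup (fun p => essCount (minor f p.1 p.2)) ≤ n := by
    apply Finset.sup_le
    intro p _
    exact essCount_le _
  have hgap' : essCount f - S.sup (fun p => essCount (minor f p.1 p.2)) = 2 := hgap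
  rw [hess] at hgap'
  have hsup : S.sup (fun p => essCount (minor f p.1 p.2)) = n - 2 := by omega
  have hcap : ∀ s t : Fin n, s ≠ t → essCount (minor f s t) ≤ n - 2 := by
    intro s t hst
    rw [← hsup]
    exact Finset.le_sup (f := fun p => essCount (minor f p.1 p.2)) (hSmem s t hst)
  -- attaining pair
  obtain ⟨p, hpS, hpsup⟩ := Finset.exists_mem_eq_sup S
    ⟨(⟨0, by omega⟩, ⟨1, by omega⟩), hSmem _ _ (by simp [Fin.ext_iff])⟩
    (fun p => essCount (minor f p.1 p.2))
  obtain ⟨i, j⟩ := p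
  have hij : i ≠ j := (Finset.mem_filter.mp hpS).2.1
  have hijcount : essCount (minor f i j) = n - 2 := by rw [← hpsup, hsup]
  set G := minor f i j with hGdef
  have hj : ¬ Essential G j := fun h => hgood i j hij h hijcount
  have hGi : ∀ a b, G (Function.update a i b) = G a :=
    (not_essential_iff _ _).mp (minor_dead_self f hij)
  have hGj : ∀ a b, G (Function.update a j b) = G a :=
    (not_essential_iff _ _).mp hj
  -- all other variables are essential in G
  have hGess : ∀ y, y ≠ i → y ≠ j → Essential G y := by
    have hsub : Finset.univ.filter (fun s => Essential G s) ⊆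
        Finset.univ \ {i, j} := by
      intro s hs
      have hEs := (Finset.mem_filter.mp hs).2
      simp only [Finset.mem_sdiff, Finset.mem_univ, true_and, Finset.mem_insert,
        Finset.mem_singleton]
      push_neg
      constructor
      · rintro rfl; exact minor_dead_self f hij hEs
      · rintro rfl; exact hj hEs
    have hcard2 : (Finset.univ \ ({i, j} : Finset (Fin n))).card = n - 2 := by
      rw [Finset.card_sdiff_of_subset (Finset.subset_univ _), Finset.card_pair hij]
      simp
    have heq : Finset.univ.filter (fun s => Essential G s) = Finset.univ \ {i, j} :=
      Finset.eq_of_subset_of_card_le hsub (by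
        rw [hcard2]
        exact le_of_eq hijcount.symm)
    intro y hyi hyj
    have hy : y ∈ Finset.univ \ ({i, j} : Finset (Fin n)) := by
      simp [hyi, hyj]
    rw [← heq] at hy
    exact (Finset.mem_filter.mp hy).2
  -- evaluation on the (i,j)-diagonal
  have hEV0 : ∀ a : Fin n → Fin k, a i = a j → f a = G a := by
    intro a ha
    have h1 : Function.update a i (a j) = a := by rw [← ha, Function.update_eq_self]
    show f a = f (Function.update a i (a j))
    rw [h1]
  -- side variables of minors (z,i) and (z,j) are alive
  have hside : ∀ z c, z ≠ i → z ≠ j → (c = i ∨ c = j) →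
      ∀ y, y ≠ i → y ≠ j → y ≠ z → Essential (minor f z c) y := by
    intro z c hzi hzj hc y hyi hyj hyz
    obtain ⟨a, β, hw⟩ := hGess y hyi hyj
    have key : ∀ s : Fin n → Fin k, s z = s i → s i = s j → minor f z c s = G s := by
      intro s h1 h2
      have hsc : s c = s z := by
        rcases hc with rfl | rfl
        · exact h1.symm
        · exact (h1.trans h2).symm
      have e : minor f z c s = f s := by
        show f _ = f _
        congr 1
        rw [hsc, Function.update_eq_self]
      rw [e]
      exact hEV0 s h2
    set t := Function.update (Function.update a i (a z)) j (a z) with ht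
    have htz : t z = a z := by
      simp [ht, Function.update_apply, hzi, hzj]
    have hti : t i = a z := by
      simp [ht, Function.update_apply, hij]
    have htj : t j = a z := by
      simp [ht, Function.update_apply]
    have hmt : minor f z c t = G a := by
      rw [key t (htz.trans hti.symm) (hti.trans htj.symm), ht, hGj, hGi]
    have hmt' : minor f z c (Function.update t y β) = G (Function.update a y β) := by
      have e1 : Function.update t y β z = a z := by
        simp [Function.update_apply, Ne.symm hyz, htz]
      have e2 : Function.update t y β i = a z := by
        simp [Function.update_apply, Ne.symm hyi, hti]
      have e3 : Function.update t y β j = a z := by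
        simp [Function.update_apply, Ne.symm hyj, htj]
      rw [key _ (e1.trans e2.symm) (e2.trans e3.symm)]
      have heq : Function.update t y β =
          Function.update (Function.update (Function.update a y β) i (a z)) j (a z) := by
        rw [ht, Function.update_comm (Ne.symm hyj), Function.update_comm (Ne.symm hyi)]
      rw [heq, hGj, hGi]
    exact ⟨t, β, by rw [hmt, hmt']; exact hw⟩
  -- merged variables of minors (z,i) and (z,j) are dead (else good pair)
  have hMD : ∀ z c, z ≠ i → z ≠ j → (c = i ∨ c = j) → ¬ Essential (minor f z c) c := by
    intro z c hzi hzj hc halive2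
    have hzc : z ≠ c := by rcases hc with rfl | rfl; exacts [hzi, hzj]
    refine hgood z c hzc halive2 ?_
    apply le_antisymm (hcap z c hzc)
    have hsub : (Finset.univ \ ({i, j, z} : Finset (Fin n))) ∪ {c} ⊆
        Finset.univ.filter (fun s => Essential (minor f z c) s) := by
      intro y hy
      rcases Finset.mem_union.mp hy with hy1 | hy2
      · have := Finset.mem_sdiff.mp hy1
        simp only [Finset.mem_insert, Finset.mem_singleton] at this
        push_neg at this
        obtain ⟨-, hyi, hyj, hyz⟩ := this
        exact Finset.mem_filter.mpr ⟨Finset.mem_univ _, hside z c hzi hzj hc y hyi hyj hyz⟩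
      · rw [Finset.mem_singleton] at hy2
        subst hy2
        exact Finset.mem_filter.mpr ⟨Finset.mem_univ _, halive2⟩
    have hc3 : ({i, j, z} : Finset (Fin n)).card = 3 := by
      rw [Finset.card_insert_of_notMem (by simp [hij, Ne.symm hzi]),
        Finset.card_pair (Ne.symm hzj)]
    have hcmem : c ∈ ({i, j, z} : Finset (Fin n)) := by
      rcases hc with rfl | rfl <;> simp
    have hdisj : Disjoint (Finset.univ \ ({i, j, z} : Finset (Fin n))) {c} := by
      simp [Finset.disjoint_singleton_right, hcmem]
    have hcard : ((Finset.univ \ ({i, j, z} : Finset (Fin n))) ∪ {c}).card = n - 2 := by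
      rw [Finset.card_union_of_disjoint hdisj, Finset.card_sdiff_of_subset (Finset.subset_univ _), hc3]
      simp only [Finset.card_univ, Fintype.card_fin, Finset.card_singleton]
      omega
    calc n - 2 = ((Finset.univ \ ({i, j, z} : Finset (Fin n))) ∪ {c}).card := hcard.symm
    _ ≤ _ := Finset.card_le_card hsub
  -- evaluation rules
  have hEVi : ∀ z, z ≠ i → z ≠ j → ∀ a : Fin n → Fin k, a z = a i →
      f a = G (Function.update a z (a j)) := by
    intro z hzi hzj a ha
    have hdz := (not_essential_iff _ _).mp (hMD z i hzi hzj (Or.inl rfl))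
    have e1 : minor f z i a = f a := by
      show f _ = f _
      congr 1
      rw [← ha, Function.update_eq_self]
    have e2 : minor f z i (Function.update a i (a j)) =
        f (Function.update (Function.update a i (a j)) z (a j)) := by
      show f _ = f _
      congr 1
      congr 1
      simp [Function.update_apply]
    have e3 : f (Function.update (Function.update a i (a j)) z (a j)) =
        G (Function.update (Function.update a i (a j)) z (a j)) := by
      apply hEV0
      simp [Function.update_apply, Ne.symm hzi, Ne.symm hzj, Ne.symm hij]
    have e4 : G (Function.update (Function.update a i (a j)) z (a j)) =
        G (Function.update a z (a j)) := by
      rw [Function.update_comm (Ne.symm hzi : i ≠ z), hGi]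
    calc f a = minor f z i a := e1.symm
    _ = minor f z i (Function.update a i (a j)) := (hdz a (a j)).symm
    _ = _ := by rw [e2, e3, e4]
  have hEVj : ∀ z, z ≠ i → z ≠ j → ∀ a : Fin n → Fin k, a z = a j →
      f a = G (Function.update a z (a i)) := by
    intro z hzi hzj a ha
    have hdz := (not_essential_iff _ _).mp (hMD z j hzi hzj (Or.inr rfl))
    have e1 : minor f z j a = f a := by
      show f _ = f _
      congr 1
      rw [← ha, Function.update_eq_self]
    have e2 : minor f z j (Function.update a j (a i)) =
        f (Function.update (Function.update a j (a i)) z (a i)) := by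
      show f _ = f _
      congr 1
      congr 1
      simp [Function.update_apply]
    have e3 : f (Function.update (Function.update a j (a i)) z (a i)) =
        G (Function.update (Function.update a j (a i)) z (a i)) := by
      apply hEV0
      simp [Function.update_apply, Ne.symm hzi, Ne.symm hzj, hij]
    have e4 : G (Function.update (Function.update a j (a i)) z (a i)) =
        G (Function.update a z (a i)) := by
      rw [Function.update_comm (Ne.symm hzj : j ≠ z), hGj]
    calc f a = minor f z j a := e1.symm
    _ = minor f z j (Function.update a j (a i)) := (hdz a (a i)).symm
    _ = _ := by rw [e2, e3, e4]
  -- the diagonal-independence lemma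
  have hC1 : ∀ z z', z ≠ z' → z ≠ i → z ≠ j → z' ≠ i → z' ≠ j →
      ∀ (r : Fin n → Fin k) (α β : Fin k),
      G (Function.update (Function.update r z α) z' α) =
      G (Function.update (Function.update r z β) z' β) := by
    intro z z' hzz' hzi hzj hz'i hz'j r α β
    set a := Function.update (Function.update (Function.update
      (Function.update r z α) z' β) i α) j β with ha
    have haz : a z = α := by
      simp [ha, Function.update_apply, hzi, hzj, hzz']
    have haz' : a z' = β := by
      simp [ha, Function.update_apply, hz'i, hz'j]
    have hai : a i = α := by
      simp [ha, Function.update_apply, hij]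
    have haj : a j = β := by
      simp [ha, Function.update_apply]
    have h1 : f a = G (Function.update a z (a j)) :=
      hEVi z hzi hzj a (by rw [haz, hai])
    have h2 : f a = G (Function.update a z' (a i)) :=
      hEVj z' hz'i hz'j a (by rw [haz', haj])
    have e1 : Function.update a z (a j) =
        Function.update (Function.update (Function.update
          (Function.update r z β) z' β) i α) j β := by
      rw [haj, ha, Function.update_comm (Ne.symm hzj : j ≠ z),
        Function.update_comm (Ne.symm hzi : i ≠ z),
        Function.update_comm (Ne.symm hzz' : z' ≠ z), Function.update_idem]
    have e2 : Function.update a z' (a i) =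
        Function.update (Function.update (Function.update
          (Function.update r z α) z' α) i α) j β := by
      rw [hai, ha, Function.update_comm (Ne.symm hz'j : j ≠ z'),
        Function.update_comm (Ne.symm hz'i : i ≠ z'), Function.update_idem]
    calc G (Function.update (Function.update r z α) z' α)
        = G (Function.update a z' (a i)) := by rw [e2, hGj, hGi]
    _ = f a := h2.symm
    _ = G (Function.update a z (a j)) := h1
    _ = G (Function.update (Function.update r z β) z' β) := by rw [e1, hGj, hGi]
  -- Case analysis on the alive pair (u, v)
  by_cases hvi : v = i
  · rw [hvi] at huv halive
    by_cases huj : u = j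
    · rw [huj] at huv halive
      -- pair (j, i)
      obtain ⟨t, b, hw⟩ := halive
      apply hw
      have e1 : minor f j i (Function.update t i b) =
          f (Function.update (Function.update t i b) j b) := by
        show f _ = f _
        congr 1
        congr 1
        simp [Function.update_apply]
      have e2 : minor f j i t = f (Function.update t j (t i)) := rfl
      rw [e1, e2]
      have g1 : f (Function.update (Function.update t i b) j b) = G t := by
        rw [hEV0 _ (by simp [Function.update_apply, Ne.symm hij]), hGj, hGi]
      have g2 : f (Function.update t j (t i)) = G t := by
        rw [hEV0 _ (by simp [Function.update_apply, Ne.symm hij]), hGj]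
      rw [g1, g2]
    · -- pair (u, i), u ∉ {i, j}
      exact hMD u i huv huj (Or.inl rfl) halive
  by_cases hvj : v = j
  · rw [hvj] at huv halive
    by_cases hui : u = i
    · rw [hui] at halive
      exact hj halive
    · exact hMD u j hui huv (Or.inr rfl) halive
  by_cases hui : u = i
  · rw [hui] at halive
    -- pair (i, v), v ∉ {i, j}
    obtain ⟨t, b, hw⟩ := halive
    apply hw
    have e1 : minor f i v (Function.update t v b) =
        f (Function.update (Function.update t v b) i b) := by
      show f _ = f _
      congr 1
      congr 1
      simp [Function.update_apply]
    have e2 : minor f i v t = f (Function.update t i (t v)) := rfl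
    rw [e1, e2]
    have g1 : f (Function.update (Function.update t v b) i b) =
        G (Function.update t v (t j)) := by
      rw [hEVi v hvi hvj _ (by simp [Function.update_apply, hvi, Ne.symm hvi])]
      have heq : Function.update (Function.update (Function.update t v b) i b) v
          ((Function.update (Function.update t v b) i b) j) =
          Function.update (Function.update t v (t j)) i b := by
        rw [Function.update_of_ne (Ne.symm hij), Function.update_of_ne (Ne.symm hvj),
          Function.update_comm (Ne.symm hvi : i ≠ v), Function.update_idem]
      rw [heq, hGi]
    have g2 : f (Function.update t i (t v)) = G (Function.update t v (t j)) := by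
      rw [hEVi v hvi hvj _ (by simp [Function.update_apply, hvi, Ne.symm hvi])]
      have heq : Function.update (Function.update t i (t v)) v
          ((Function.update t i (t v)) j) =
          Function.update (Function.update t v (t j)) i (t v) := by
        rw [Function.update_of_ne (Ne.symm hij),
          Function.update_comm (Ne.symm hvi : i ≠ v)]
      rw [heq, hGi]
    rw [g1, g2]
  by_cases huj : u = j
  · rw [huj] at halive
    -- pair (j, v), v ∉ {i, j}
    obtain ⟨t, b, hw⟩ := halive
    apply hw
    have e1 : minor f j v (Function.update t v b) =
        f (Function.update (Function.update t v b) j b) := by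
      show f _ = f _
      congr 1
      congr 1
      simp [Function.update_apply]
    have e2 : minor f j v t = f (Function.update t j (t v)) := rfl
    rw [e1, e2]
    have g1 : f (Function.update (Function.update t v b) j b) =
        G (Function.update t v (t i)) := by
      rw [hEVj v hvi hvj _ (by simp [Function.update_apply, hvj, Ne.symm hvj])]
      have heq : Function.update (Function.update (Function.update t v b) j b) v
          ((Function.update (Function.update t v b) j b) i) =
          Function.update (Function.update t v (t i)) j b := by
        rw [Function.update_of_ne hij, Function.update_of_ne (Ne.symm hvi),
          Function.update_comm (Ne.symm hvj : j ≠ v), Function.update_idem]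
      rw [heq, hGj]
    have g2 : f (Function.update t j (t v)) = G (Function.update t v (t i)) := by
      rw [hEVj v hvi hvj _ (by simp [Function.update_apply, hvj, Ne.symm hvj])]
      have heq : Function.update (Function.update t j (t v)) v
          ((Function.update t j (t v)) i) =
          Function.update (Function.update t v (t i)) j (t v) := by
        rw [Function.update_of_ne hij,
          Function.update_comm (Ne.symm hvj : j ≠ v)]
      rw [heq, hGj]
    rw [g1, g2]
  -- MAIN CASE : u, v ∉ {i, j}, u ≠ v, merged (u,v) alive
  obtain ⟨d, hdmem, hdnotmem⟩ : ∃ d, d ∈ Finset.univ \ ({u, v} : Finset (Fin n)) ∧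
      d ∉ Finset.univ.filter (fun s => Essential (minor f u v) s) := by
    by_contra hcon
    push_neg at hcon
    have hsub : (Finset.univ \ ({u, v} : Finset (Fin n))) ∪ {v} ⊆
        Finset.univ.filter (fun s => Essential (minor f u v) s) := by
      intro y hy
      rcases Finset.mem_union.mp hy with hy1 | hy2
      · exact hcon y hy1
      · rw [Finset.mem_singleton] at hy2
        subst hy2
        exact Finset.mem_filter.mpr ⟨Finset.mem_univ _, halive⟩
    have hdisj : Disjoint (Finset.univ \ ({u, v} : Finset (Fin n))) {v} := by
      simp [Finset.disjoint_singleton_right]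
    have hcard : ((Finset.univ \ ({u, v} : Finset (Fin n))) ∪ {v}).card = n - 1 := by
      rw [Finset.card_union_of_disjoint hdisj,
        Finset.card_sdiff_of_subset (Finset.subset_univ _), Finset.card_pair huv]
      simp only [Finset.card_univ, Fintype.card_fin, Finset.card_singleton]
      omega
    have h1 := Finset.card_le_card hsub
    rw [hcard] at h1
    have h2 : essCount (minor f u v) ≤ n - 2 := hcap u v huv
    unfold essCount at h2
    omega
  have hdu : d ≠ u := by
    have := Finset.mem_sdiff.mp hdmem
    simp only [Finset.mem_insert, Finset.mem_singleton] at this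
    push_neg at this
    exact this.2.1
  have hdv : d ≠ v := by
    have := Finset.mem_sdiff.mp hdmem
    simp only [Finset.mem_insert, Finset.mem_singleton] at this
    push_neg at this
    exact this.2.2
  have hdnot : ¬ Essential (minor f u v) d := fun h =>
    hdnotmem (Finset.mem_filter.mpr ⟨Finset.mem_univ _, h⟩)
  have hPdead := (not_essential_iff _ _).mp hdnot
  -- f is unchanged by moving coordinate d on the u=v plane
  have hPd : ∀ y : Fin n → Fin k, y u = y v → ∀ β,
      f (Function.update y d β) = f y := by
    intro y hy β
    have e1 : minor f u v y = f y := by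
      show f _ = f _
      congr 1
      rw [← hy, Function.update_eq_self]
    have e2 : minor f u v (Function.update y d β) = f (Function.update y d β) := by
      show f _ = f _
      congr 1
      funext s
      by_cases hs : s = u
      · subst hs
        simp [Function.update_apply, hdu, Ne.symm hdu, Ne.symm hdv, hy]
      · simp [Function.update_apply, hs]
    rw [← e1, ← e2, hPdead]
  -- the witness
  obtain ⟨a, b, hw⟩ := halive
  have e1 : minor f u v (Function.update a v b) =
      f (Function.update (Function.update a v b) u b) := by
    show f _ = f _
    congr 1
    congr 1
    simp [Function.update_apply]
  have e2 : minor f u v a = f (Function.update a u (a v)) := rfl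
  rw [e1, e2] at hw
  apply hw
  have huv' : v ≠ u := Ne.symm huv
  have hyuv : ∀ c : Fin k, (Function.update (Function.update a v c) u c) u = c ∧
      (Function.update (Function.update a v c) u c) v = c := by
    intro c
    constructor
    · simp [Function.update_apply]
    · simp [Function.update_apply, huv']
  have main : ∀ c : Fin k,
      f (Function.update (Function.update a v c) u c) =
      f (Function.update (Function.update a v (a v)) u (a v)) := by
    have hcases : d = i ∨ d = j ∨ (d ≠ i ∧ d ≠ j) := by tauto
    rcases hcases with hdi | hdj | ⟨hdi, hdj⟩
    · -- d = i
      have ff : ∀ c : Fin k, f (Function.update (Function.update a v c) u c) =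
          G (Function.update (Function.update a v c) u c) := by
        intro c
        set y := Function.update (Function.update a v c) u c with hy
        obtain ⟨hy1, hy2⟩ := hyuv c
        have h1 : f (Function.update y d (y j)) = f y := hPd y (hy1.trans hy2.symm) (y j)
        rw [hdi] at h1
        have h2 : f (Function.update y i (y j)) = G (Function.update y i (y j)) := by
          apply hEV0
          simp [Function.update_apply, Ne.symm hij]
        rw [← h1, h2, hGi]
      intro c
      rw [ff c, ff (a v)]
      exact hC1 v u huv' hvi hvj hui huj a c (a v)
    · -- d = j
      have ff : ∀ c : Fin k, f (Function.update (Function.update a v c) u c) =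
          G (Function.update (Function.update a v c) u c) := by
        intro c
        set y := Function.update (Function.update a v c) u c with hy
        obtain ⟨hy1, hy2⟩ := hyuv c
        have h1 : f (Function.update y d (y i)) = f y := hPd y (hy1.trans hy2.symm) (y i)
        rw [hdj] at h1
        have h2 : f (Function.update y j (y i)) = G (Function.update y j (y i)) := by
          apply hEV0
          simp [Function.update_apply, hij]
        rw [← h1, h2, hGj]
      intro c
      rw [ff c, ff (a v)]
      exact hC1 v u huv' hvi hvj hui huj a c (a v)
    · -- d ∉ {i, j, u, v}
      have ff : ∀ c : Fin k, f (Function.update (Function.update a v c) u c) =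
          G (Function.update (Function.update (Function.update a d (a j)) v c) u c) := by
        intro c
        set y := Function.update (Function.update a v c) u c with hy
        obtain ⟨hy1, hy2⟩ := hyuv c
        have h1 : f (Function.update y d (y i)) = f y := hPd y (hy1.trans hy2.symm) (y i)
        have h2 : f (Function.update y d (y i)) =
            G (Function.update (Function.update y d (y i)) d
              ((Function.update y d (y i)) j)) := by
          apply hEVi d hdi hdj
          simp [Function.update_apply, Ne.symm hdi]
        have h3 : Function.update (Function.update y d (y i)) d
            ((Function.update y d (y i)) j) =
            Function.update (Function.update (Function.update a d (a j)) v c) u c := by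
          have hyj : y j = a j := by
            simp [hy, Function.update_apply, Ne.symm huj, Ne.symm hvj]
          funext s
          by_cases hs1 : s = d
          · subst hs1
            simp [Function.update_apply, Ne.symm hdj, hdu, hdv, hyj]
          · by_cases hs2 : s = u
            · subst hs2
              simp [Function.update_apply, hs1, hy]
            · by_cases hs3 : s = v
              · subst hs3
                simp [Function.update_apply, hs1, Ne.symm huv, hy]
              · simp [Function.update_apply, hs1, hs2, hs3, hy]
        rw [← h1, h2, h3]
      intro c
      rw [ff c, ff (a v)]
      exact hC1 v u huv' hvi hvj hui huj (Function.update a d (a j)) c (a v)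
  have hfinal := main b
  rw [Function.update_eq_self] at hfinal
  exact hfinal
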